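/- (CG=DG* for source depending only on t) Let a < b, F : [a,b] → ℝ integrable, û_a ∈ ℝ. Suppose u_CG ∈ 𝒫_{k+1} satisfies ∫_a^b v u_CG' dt = ∫_a^b F v dt for all v ∈ 𝒫_k with u_CG(a) = û_a, and u_DG ∈ 𝒫_k satisfies the DG relation −∫_a^b u_DG v' dt + u_DG(b)v(b) − û_a v(a) = ∫_a^b F v dt for all v ∈ 𝒫_k. Then u_CG = u_DG + (û_a − u_DG(a))𝓡, where 𝓡 is the scaled left-Radau polynomial of degree k+1 on [a,b]; in particular u_CG(b) = u_DG(b). -/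

import Mathlib

open Polynomial MeasureTheory Set

lemma poly_intble' (f : ℝ → ℝ) (hf : Continuous f) (a b : ℝ) :
    IntervalIntegrable f volume a b := hf.intervalIntegrable _ _

lemma poly_integral_derivative (p : Polynomial ℝ) (a b : ℝ) :
    ∫ t in a..b, (derivative p).eval t = p.eval b - p.eval a := by
  apply intervalIntegral.integral_eq_sub_of_hasDerivAt
  · intro x _; exact p.hasDerivAt x
  · exact (derivative p).continuous.intervalIntegrable _ _

lemma poly_ibp (p q : Polynomial ℝ) (a b : ℝ) :
    ∫ t in a..b, (p.eval t * (derivative q).eval t + (derivative p).eval t * q.eval t)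
      = p.eval b * q.eval b - p.eval a * q.eval a := by
  have := poly_integral_derivative (p * q) a b
  simp only [derivative_mul, eval_add, eval_mul] at this
  rw [← this]
  congr 1; funext t; ring

/-- CG = post-processed DG for a source depending only on `t`: If
`u_CG ∈ 𝒫_{k+1}` solves the CG weak formulation with `u_CG(a) = uhat_a`, and
`u_DG ∈ 𝒫_k` solves the DG weak formulation with the same data, and `𝓡 ∈ 𝒫_{k+1}` is the
scaled left-Radau polynomial (`𝓡(b)=0`, `𝓡(a)=1`, orthogonal to `𝒫_{k-1}`), then
`u_CG = u_DG + (uhat_a - u_DG(a))·𝓡`; in particular `u_CG(b) = u_DG(b)`. -/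
theorem cg_eq_postprocessed_dg (k : ℕ) (a b : ℝ) (hab : a < b)
    (F : ℝ → ℝ) (hF : IntervalIntegrable F volume a b) (uhat_a : ℝ)
    (𝓡 : Polynomial ℝ) (h𝓡deg : 𝓡.degree ≤ ((k + 1 : ℕ) : WithBot ℕ))
    (h𝓡b : 𝓡.eval b = 0) (h𝓡a : 𝓡.eval a = 1)
    (h𝓡orth : ∀ w : Polynomial ℝ, w.degree < (k : ℕ) →
      ∫ t in a..b, 𝓡.eval t * w.eval t = 0)
    (uCG : Polynomial ℝ) (huCGdeg : uCG.degree ≤ ((k + 1 : ℕ) : WithBot ℕ))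
    (hCG : ∀ v : Polynomial ℝ, v.degree ≤ (k : ℕ) →
      ∫ t in a..b, v.eval t * (Polynomial.derivative uCG).eval t
        = ∫ t in a..b, F t * v.eval t)
    (hCGa : uCG.eval a = uhat_a)
    (uDG : Polynomial ℝ) (huDGdeg : uDG.degree ≤ (k : ℕ))
    (hDG : ∀ v : Polynomial ℝ, v.degree ≤ (k : ℕ) →
      -(∫ t in a..b, uDG.eval t * (Polynomial.derivative v).eval t)
          + uDG.eval b * v.eval b - uhat_a * v.eval a
        = ∫ t in a..b, F t * v.eval t) :
    uCG = uDG + Polynomial.C (uhat_a - uDG.eval a) * 𝓡 ∧ uCG.eval b = uDG.eval b := by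
  set c : ℝ := uhat_a - uDG.eval a with hc
  set E : Polynomial ℝ := uCG - uDG - Polynomial.C c * 𝓡 with hE
  -- orthogonality applied to derivatives
  have horth' : ∀ v : Polynomial ℝ, v.degree ≤ (k : ℕ) →
      ∫ t in a..b, 𝓡.eval t * (derivative v).eval t = 0 := by
    intro v hv
    apply h𝓡orth
    rcases eq_or_ne v 0 with rfl | h
    · simp only [derivative_zero, degree_zero]
      exact bot_lt_iff_ne_bot.mpr (by simp)
    · exact lt_of_lt_of_le (degree_derivative_lt h) hv
  -- key: ∫ v E' = 0 for deg v ≤ k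
  have key : ∀ v : Polynomial ℝ, v.degree ≤ (k : ℕ) →
      ∫ t in a..b, v.eval t * (derivative E).eval t = 0 := by
    intro v hv
    have h1 := hCG v hv
    have h2 := hDG v hv
    have hOR := horth' v hv
    -- integration by parts for (v, uDG) and (v, 𝓡)
    have ibpD : (∫ t in a..b, v.eval t * (derivative uDG).eval t)
        + (∫ t in a..b, (derivative v).eval t * uDG.eval t)
        = v.eval b * uDG.eval b - v.eval a * uDG.eval a := by
      erw [← intervalIntegral.integral_add
        ((v.continuous.mul (derivative uDG).continuous).intervalIntegrable _ _)
        (((derivative v).continuous.mul uDG.continuous).intervalIntegrable _ _)]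
      exact poly_ibp v uDG a b
    have ibpR : (∫ t in a..b, v.eval t * (derivative 𝓡).eval t)
        + (∫ t in a..b, (derivative v).eval t * 𝓡.eval t)
        = v.eval b * 𝓡.eval b - v.eval a * 𝓡.eval a := by
      erw [← intervalIntegral.integral_add
        ((v.continuous.mul (derivative 𝓡).continuous).intervalIntegrable _ _)
        (((derivative v).continuous.mul 𝓡.continuous).intervalIntegrable _ _)]
      exact poly_ibp v 𝓡 a b
    -- rewrite commuted integrands
    have comm1 : (∫ t in a..b, (derivative v).eval t * uDG.eval t)
        = ∫ t in a..b, uDG.eval t * (derivative v).eval t := by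
      congr 1; funext t; ring
    have comm2 : (∫ t in a..b, (derivative v).eval t * 𝓡.eval t)
        = ∫ t in a..b, 𝓡.eval t * (derivative v).eval t := by
      congr 1; funext t; ring
    have split : (∫ t in a..b, v.eval t * (derivative E).eval t)
        = (∫ t in a..b, v.eval t * (derivative uCG).eval t)
          - (∫ t in a..b, v.eval t * (derivative uDG).eval t)
          - c * ∫ t in a..b, v.eval t * (derivative 𝓡).eval t := by
      rw [← intervalIntegral.integral_const_mul]
      erw [← intervalIntegral.integral_sub
          ((v.continuous.mul (derivative uCG).continuous).intervalIntegrable _ _)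
          ((v.continuous.mul (derivative uDG).continuous).intervalIntegrable _ _),
        ← intervalIntegral.integral_sub
          (((v.continuous.mul (derivative uCG).continuous).sub
            (v.continuous.mul (derivative uDG).continuous)).intervalIntegrable _ _)
          ((continuous_const.mul (v.continuous.mul
            (derivative 𝓡).continuous)).intervalIntegrable _ _)]
      congr 1; funext t
      simp only [Pi.mul_apply, Pi.sub_apply, hE, derivative_sub, derivative_mul, derivative_C, eval_sub, eval_mul,
        eval_add, eval_C, zero_mul, zero_add]
      ring
    rw [comm1] at ibpD
    rw [comm2] at ibpR
    rw [h𝓡b, h𝓡a] at ibpR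
    rw [split]
    linear_combination h1 - ibpD - h2 - c * ibpR + c * hOR - eval a v * hc
  -- degree of E and its derivative
  have hEdeg : E.degree ≤ ((k + 1 : ℕ) : WithBot ℕ) := by
    have h1 : (uCG - uDG).degree ≤ ((k + 1 : ℕ) : WithBot ℕ) :=
      le_trans (degree_sub_le _ _) (max_le huCGdeg
        (le_trans huDGdeg (by exact_mod_cast WithBot.coe_le_coe.mpr (Nat.le_succ k))))
    have h2 : (Polynomial.C c * 𝓡).degree ≤ ((k + 1 : ℕ) : WithBot ℕ) := by
      rw [← smul_eq_C_mul]
      exact le_trans (degree_smul_le _ _) h𝓡deg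
    exact le_trans (degree_sub_le _ _) (max_le h1 h2)
  have hE'deg : (derivative E).degree ≤ (k : ℕ) := by
    rcases eq_or_ne E 0 with h | h
    · simp [h]
    · have h2 : (derivative E).degree < ((k + 1 : ℕ) : WithBot ℕ) :=
        lt_of_lt_of_le (degree_derivative_lt h) hEdeg
      rcases eq_or_ne (derivative E) 0 with h3 | h3
      · simp [h3]
      · rw [← natDegree_lt_iff_degree_lt h3] at h2
        exact degree_le_of_natDegree_le (by omega)
  -- ∫ (E')² = 0 forces E' = 0
  have hsq : (∫ t in a..b, (derivative E).eval t * (derivative E).eval t) = 0 :=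
    key (derivative E) hE'deg
  have hE'zero : derivative E = 0 := by
    by_contra hne
    have hfin : Set.Finite {x : ℝ | IsRoot (derivative E) x} :=
      Polynomial.finite_setOf_isRoot hne
    have hnonneg : 0 ≤ᵐ[volume.restrict (Ioc a b)]
        fun t => (derivative E).eval t * (derivative E).eval t :=
      Filter.Eventually.of_forall fun t => mul_self_nonneg _
    have hae := (intervalIntegral.integral_eq_zero_iff_of_le_of_nonneg_ae hab.le hnonneg
      (((derivative E).continuous.mul (derivative E).continuous).intervalIntegrable _ _)).mp hsq
    have hnull : volume (Ioc a b ∩ {t : ℝ |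
        ¬ (derivative E).eval t * (derivative E).eval t = 0}) = 0 := by
      have := MeasureTheory.ae_iff.mp hae
      rwa [Measure.restrict_apply₀' (measurableSet_Ioc.nullMeasurableSet), Set.inter_comm] at this
    have hsub : Ioc a b ⊆ {x : ℝ | IsRoot (derivative E) x} ∪
        (Ioc a b ∩ {t : ℝ | ¬ (derivative E).eval t * (derivative E).eval t = 0}) := by
      intro t ht
      by_cases hr : (derivative E).eval t = 0
      · exact Or.inl hr
      · exact Or.inr ⟨ht, mul_ne_zero hr hr⟩
    have hle : volume (Ioc a b) ≤ 0 := by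
      calc volume (Ioc a b)
          ≤ volume ({x : ℝ | IsRoot (derivative E) x} ∪
            (Ioc a b ∩ {t : ℝ | ¬ (derivative E).eval t * (derivative E).eval t = 0})) :=
            measure_mono hsub
        _ ≤ volume {x : ℝ | IsRoot (derivative E) x} +
            volume (Ioc a b ∩ {t : ℝ | ¬ (derivative E).eval t * (derivative E).eval t = 0}) :=
            measure_union_le _ _
        _ = 0 := by rw [hfin.measure_zero, hnull, add_zero]
    have hpos : 0 < volume (Ioc a b) := by
      rw [Real.volume_Ioc]
      exact ENNReal.ofReal_pos.mpr (by linarith)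
    exact absurd hle (not_le.mpr hpos)
  -- E is constant, and E(a) = 0
  have hEC : E = Polynomial.C (E.coeff 0) :=
    eq_C_of_natDegree_eq_zero (natDegree_eq_zero_of_derivative_eq_zero hE'zero)
  have hEa : E.eval a = 0 := by
    simp only [hE, eval_sub, eval_mul, eval_C, h𝓡a, mul_one, hCGa, hc]
    ring
  have hE0 : E = 0 := by
    rw [hEC] at hEa ⊢
    simp only [eval_C] at hEa
    rw [hEa, map_zero]
  have hmain : uCG = uDG + Polynomial.C c * 𝓡 := by
    have : uCG - (uDG + Polynomial.C c * 𝓡) = 0 := by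
      rw [← sub_sub]; exact hE0
    exact sub_eq_zero.mp this
  refine ⟨hmain, ?_⟩
  rw [hmain]
  simp [h𝓡b]
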